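/- For every ζ > 0, K₃(ζ)/K₂(ζ) > 1 + 5/(2ζ), where K_ν(ζ) := ∫₀^∞ cosh(νt)·exp(−ζ·cosh t) dt is the modified Bessel function of the second kind. -/

import Mathlib

open MeasureTheory Real Set Filter

/-- Modified Bessel function of the second kind,
`K_ν(ζ) = ∫₀^∞ cosh(νt)·exp(−ζ·cosh t) dt`. -/
noncomputable def besselK (ν ζ : ℝ) : ℝ :=
  ∫ t in Set.Ioi (0 : ℝ), Real.cosh (ν * t) * Real.exp (-ζ * Real.cosh t)

namespace Stmt3Aux

lemma abs_cosh_le {u v : ℝ} (h : |u| ≤ v) : |Real.cosh u| ≤ Real.exp v := by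
  obtain ⟨h1, h2⟩ := abs_le.mp h
  have e1 : Real.exp u ≤ Real.exp v := Real.exp_le_exp.mpr h2
  have e2 : Real.exp (-u) ≤ Real.exp v := Real.exp_le_exp.mpr (by linarith)
  rw [abs_of_pos (Real.cosh_pos u), Real.cosh_eq]
  linarith

lemma abs_sinh_le {u v : ℝ} (h : |u| ≤ v) : |Real.sinh u| ≤ Real.exp v := by
  obtain ⟨h1, h2⟩ := abs_le.mp h
  have e1 : Real.exp u ≤ Real.exp v := Real.exp_le_exp.mpr h2
  have e2 : Real.exp (-u) ≤ Real.exp v := Real.exp_le_exp.mpr (by linarith)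
  have p1 := Real.exp_pos u
  have p2 := Real.exp_pos (-u)
  rw [Real.sinh_eq, abs_le]
  constructor <;> nlinarith

lemma cosh_lower {t : ℝ} (ht : 0 ≤ t) : 1 + t ^ 2 / 2 ≤ Real.cosh t := by
  have h1 : t / 2 ≤ Real.sinh (t / 2) := by
    rcases eq_or_lt_of_le (by linarith : (0:ℝ) ≤ t / 2) with h | h
    · simp [← h]
    · exact (Real.self_lt_sinh_iff.mpr h).le
  have h2 := Real.cosh_two_mul (t/2)
  rw [show 2 * (t/2) = t by ring] at h2
  have h3 : Real.cosh (t/2) ^ 2 = Real.sinh (t/2) ^ 2 + 1 := Real.cosh_sq _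
  nlinarith

variable {ζ : ℝ}

lemma integrableOn_exp_lin (hζ : 0 < ζ) (a : ℝ) :
    IntegrableOn (fun t : ℝ => Real.exp (a * t - ζ * Real.cosh t)) (Ioi 0) := by
  have hg : Integrable (fun t : ℝ =>
      Real.exp (a ^ 2 / (2 * ζ)) * Real.exp (-(ζ/2) * (t - a/ζ) ^ 2)) :=
    ((integrable_exp_neg_mul_sq (by positivity : (0:ℝ) < ζ/2)).comp_sub_right (a/ζ)).const_mul _
  apply Integrable.mono' hg.integrableOn
  · exact (Real.continuous_exp.comp (by continuity)).aestronglyMeasurable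
  · filter_upwards [ae_restrict_mem measurableSet_Ioi] with t ht
    rw [Real.norm_eq_abs, abs_of_pos (Real.exp_pos _), ← Real.exp_add]
    apply Real.exp_le_exp.mpr
    have := cosh_lower (le_of_lt (mem_Ioi.mp ht))
    have h2 : a * t - ζ * (1 + t ^ 2 / 2) ≤ a ^ 2 / (2 * ζ) + -(ζ/2) * (t - a/ζ) ^ 2 := by
      rw [div_add' _ _ _ (by positivity), ← sub_nonneg]
      field_simp
      nlinarith [sq_nonneg (ζ * t - a), sq_nonneg ζ]
    nlinarith

lemma integrableOn_mul_exp (hζ : 0 < ζ) {P : ℝ → ℝ} (hP : Continuous P) (C : ℝ)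
    (hb : ∀ t ∈ Ioi (0:ℝ), |P t| ≤ C * Real.exp (4 * t)) :
    IntegrableOn (fun t => P t * Real.exp (-ζ * Real.cosh t)) (Ioi 0) := by
  apply Integrable.mono' ((integrableOn_exp_lin hζ 4).const_mul C)
  · exact (hP.mul (Real.continuous_exp.comp (by continuity))).aestronglyMeasurable
  · filter_upwards [ae_restrict_mem measurableSet_Ioi] with t ht
    rw [Real.norm_eq_abs, abs_mul, abs_of_pos (Real.exp_pos _),
      sub_eq_add_neg, Real.exp_add]
    have h1 := hb t ht
    have h2 := Real.exp_pos (-(ζ * Real.cosh t))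
    have h3 : Real.exp (-ζ * Real.cosh t) = Real.exp (-(ζ * Real.cosh t)) := by ring_nf
    rw [h3, ← mul_assoc]
    exact mul_le_mul_of_nonneg_right h1 h2.le

lemma integrableOn_cosh_mul (hζ : 0 < ζ) {ν : ℝ} (hν : |ν| ≤ 4) :
    IntegrableOn (fun t => Real.cosh (ν * t) * Real.exp (-ζ * Real.cosh t)) (Ioi 0) := by
  refine integrableOn_mul_exp hζ (by continuity) 1 fun t ht => ?_
  rw [one_mul]
  refine abs_cosh_le ?_
  rw [abs_mul, abs_of_pos (mem_Ioi.mp ht)]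
  exact mul_le_mul_of_nonneg_right hν (mem_Ioi.mp ht).le

lemma integrableOn_sinh_sinh (hζ : 0 < ζ) {ν : ℝ} (hν : |ν| ≤ 3) :
    IntegrableOn (fun t => Real.sinh t * Real.sinh (ν * t) * Real.exp (-ζ * Real.cosh t))
      (Ioi 0) := by
  refine integrableOn_mul_exp hζ (by continuity) 1 fun t ht => ?_
  have ht0 := (mem_Ioi.mp ht).le
  rw [one_mul, abs_mul, show (4:ℝ) * t = t + 3 * t by ring, Real.exp_add]
  have h1 : |Real.sinh t| ≤ Real.exp t := abs_sinh_le (le_of_eq (abs_of_nonneg ht0))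
  have h2 : |Real.sinh (ν * t)| ≤ Real.exp (3 * t) := by
    refine abs_sinh_le ?_
    rw [abs_mul, abs_of_nonneg ht0]
    nlinarith
  exact mul_le_mul h1 h2 (abs_nonneg _) (Real.exp_pos _).le

lemma integrableOn_w (hζ : 0 < ζ) :
    IntegrableOn (fun t => (Real.cosh t - 1) ^ 3 * (Real.cosh t + 1) *
      Real.exp (-ζ * Real.cosh t)) (Ioi 0) := by
  refine integrableOn_mul_exp hζ (by continuity) 2 fun t ht => ?_
  have ht0 := (mem_Ioi.mp ht).le
  have hc1 : 1 ≤ Real.cosh t := Real.one_le_cosh t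
  have hce : Real.cosh t ≤ Real.exp t := by
    have := Real.exp_le_exp.mpr (neg_le_self ht0)
    rw [Real.cosh_eq]; linarith
  have hep : (1:ℝ) ≤ Real.exp t := Real.one_le_exp ht0
  have key : (Real.cosh t - 1) ^ 3 * (Real.cosh t + 1) ≤ Real.exp t ^ 3 * (2 * Real.exp t) := by
    have hp : (Real.cosh t - 1) ^ 3 ≤ Real.exp t ^ 3 :=
      pow_le_pow_left₀ (by linarith) (by linarith) 3
    have := Real.exp_pos t
    nlinarith [pow_nonneg (show (0:ℝ) ≤ Real.cosh t - 1 by linarith) 3,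
      pow_nonneg (Real.exp_pos t).le 3]
  have he4 : Real.exp t ^ 3 * (2 * Real.exp t) = 2 * Real.exp (4 * t) := by
    rw [show (4:ℝ) * t = t + (t + (t + t)) by ring, Real.exp_add, Real.exp_add, Real.exp_add]
    ring
  have h0 : 0 ≤ (Real.cosh t - 1) ^ 3 * (Real.cosh t + 1) :=
    mul_nonneg (pow_nonneg (by linarith) 3) (by linarith)
  rw [abs_of_nonneg h0]
  linarith [key, he4.le]

lemma tendsto_F_zero (hζ : 0 < ζ) {ν : ℝ} (hν : |ν| ≤ 3) :
    Tendsto (fun t => Real.sinh (ν * t) * Real.exp (-ζ * Real.cosh t)) atTop (nhds 0) := by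
  have hbot : Tendsto (fun t : ℝ => 3 * t - ζ * Real.cosh t) atTop atBot := by
    have hle : (fun t : ℝ => 3 * t - ζ * Real.cosh t) ≤ᶠ[atTop]
        (fun t : ℝ => 3 * t - ζ * (1 + t ^ 2 / 2)) := by
      filter_upwards [eventually_ge_atTop (0:ℝ)] with t ht
      have := cosh_lower ht
      show 3 * t - ζ * Real.cosh t ≤ 3 * t - ζ * (1 + t ^ 2 / 2)
      nlinarith
    refine tendsto_atBot_mono' atTop hle ?_
    · have h1 : Tendsto (fun t : ℝ => (ζ/2) * t - 3) atTop atTop :=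
        tendsto_atTop_add_const_right _ _ ((tendsto_id.const_mul_atTop (by positivity)))
      have h2 : Tendsto (fun t : ℝ => t * ((ζ/2) * t - 3)) atTop atTop :=
        Tendsto.atTop_mul_atTop₀ tendsto_id h1
      have h3 : Tendsto (fun t : ℝ => -(t * ((ζ/2) * t - 3)) - ζ) atTop atBot :=
        tendsto_atBot_add_const_right _ _ (tendsto_neg_atTop_atBot.comp h2)
      refine h3.congr fun t => by ring
  have hg : Tendsto (fun t : ℝ => Real.exp (3 * t - ζ * Real.cosh t)) atTop (nhds 0) :=
    Real.tendsto_exp_atBot.comp hbot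
  refine squeeze_zero_norm' ?_ hg
  filter_upwards [eventually_ge_atTop (0:ℝ)] with t ht
  rw [norm_mul, Real.norm_eq_abs, Real.norm_eq_abs, abs_of_pos (Real.exp_pos _),
    show (3:ℝ) * t - ζ * Real.cosh t = 3 * t + -ζ * Real.cosh t by ring, Real.exp_add]
  refine mul_le_mul_of_nonneg_right ?_ (Real.exp_pos _).le
  refine abs_sinh_le ?_
  rw [abs_mul, abs_of_nonneg ht]
  nlinarith [abs_nonneg ν]

lemma prod_to_sum (ν t : ℝ) : 2 * (Real.sinh t * Real.sinh (ν * t)) =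
    Real.cosh ((ν + 1) * t) - Real.cosh ((ν - 1) * t) := by
  rw [show (ν + 1) * t = ν * t + t by ring, show (ν - 1) * t = ν * t - t by ring,
    Real.cosh_add, Real.cosh_sub]
  ring

lemma recurrence (hζ : 0 < ζ) {ν : ℝ} (hν0 : 0 ≤ ν) (hν : ν ≤ 3) :
    ζ * (besselK (ν + 1) ζ - besselK (ν - 1) ζ) = 2 * ν * besselK ν ζ := by
  set F : ℝ → ℝ := fun t => Real.sinh (ν * t) * Real.exp (-ζ * Real.cosh t) with hF
  set F' : ℝ → ℝ := fun t =>
    (ν * Real.cosh (ν * t) - ζ * (Real.sinh t * Real.sinh (ν * t))) *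
      Real.exp (-ζ * Real.cosh t) with hF'
  have hνabs : |ν| ≤ 3 := by rw [abs_of_nonneg hν0]; exact hν
  have hderiv : ∀ t : ℝ, HasDerivAt F (F' t) t := by
    intro t
    have h1 : HasDerivAt (fun u : ℝ => ν * u) ν t := by
      simpa using (hasDerivAt_id t).const_mul ν
    have h2 : HasDerivAt (fun u : ℝ => Real.sinh (ν * u)) (Real.cosh (ν * t) * ν) t :=
      (Real.hasDerivAt_sinh (ν * t)).comp t h1
    have h3 : HasDerivAt (fun u : ℝ => -ζ * Real.cosh u) (-ζ * Real.sinh t) t :=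
      (Real.hasDerivAt_cosh t).const_mul (-ζ)
    have h4 := h3.exp
    have h5 := h2.mul h4
    have h6 : F' t = Real.cosh (ν * t) * ν * Real.exp (-ζ * Real.cosh t) +
        Real.sinh (ν * t) * (Real.exp (-ζ * Real.cosh t) * (-ζ * Real.sinh t)) := by
      show (ν * Real.cosh (ν * t) - ζ * (Real.sinh t * Real.sinh (ν * t))) *
        Real.exp (-ζ * Real.cosh t) = _
      ring
    rw [h6]
    exact h5
  have hint1 : IntegrableOn (fun t => Real.cosh (ν * t) * Real.exp (-ζ * Real.cosh t))
      (Ioi 0) := integrableOn_cosh_mul hζ (by linarith [abs_of_nonneg hν0 ▸ hν] : |ν| ≤ 4)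
  have hint2 := integrableOn_sinh_sinh hζ hνabs
  have hintF' : IntegrableOn F' (Ioi 0) := by
    have : F' = fun t => ν * (Real.cosh (ν * t) * Real.exp (-ζ * Real.cosh t)) -
        ζ * (Real.sinh t * Real.sinh (ν * t) * Real.exp (-ζ * Real.cosh t)) := by
      funext t; simp only [hF']; ring
    rw [this]
    exact ((hint1.const_mul ν).sub (hint2.const_mul ζ))
  have hFTC : ∫ t in Ioi (0:ℝ), F' t = 0 - F 0 := by
    refine integral_Ioi_of_hasDerivAt_of_tendsto ?_ (fun x _ => hderiv x) hintF' ?_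
    · exact (hderiv 0).continuousAt.continuousWithinAt
    · exact tendsto_F_zero hζ hνabs
  have hF0 : F 0 = 0 := by simp [hF]
  rw [hF0, sub_zero] at hFTC
  have hsplit : ∫ t in Ioi (0:ℝ), F' t =
      ν * besselK ν ζ - ζ * ∫ t in Ioi (0:ℝ),
        Real.sinh t * Real.sinh (ν * t) * Real.exp (-ζ * Real.cosh t) := by
    rw [besselK, ← integral_const_mul, ← integral_const_mul, ← integral_sub
      (hint1.const_mul ν) (hint2.const_mul ζ)]
    refine setIntegral_congr_fun measurableSet_Ioi fun t _ => ?_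
    simp only [hF']
    ring
  have hps : ∫ t in Ioi (0:ℝ), Real.sinh t * Real.sinh (ν * t) * Real.exp (-ζ * Real.cosh t)
      = (1/2) * besselK (ν+1) ζ - (1/2) * besselK (ν-1) ζ := by
    have hi1 : IntegrableOn (fun t => Real.cosh ((ν+1) * t) * Real.exp (-ζ * Real.cosh t))
        (Ioi 0) := integrableOn_cosh_mul hζ (by rw [abs_of_nonneg (by linarith)]; linarith)
    have hi2 : IntegrableOn (fun t => Real.cosh ((ν-1) * t) * Real.exp (-ζ * Real.cosh t))
        (Ioi 0) := integrableOn_cosh_mul hζ (by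
          rw [abs_le]; constructor <;> linarith)
    rw [besselK, besselK, ← integral_const_mul, ← integral_const_mul,
      ← integral_sub (hi1.const_mul _) (hi2.const_mul _)]
    refine setIntegral_congr_fun measurableSet_Ioi fun t _ => ?_
    show Real.sinh t * Real.sinh (ν * t) * Real.exp (-ζ * Real.cosh t) =
      1/2 * (Real.cosh ((ν+1) * t) * Real.exp (-ζ * Real.cosh t)) -
      1/2 * (Real.cosh ((ν-1) * t) * Real.exp (-ζ * Real.cosh t))
    linear_combination (Real.exp (-ζ * Real.cosh t) / 2) * prod_to_sum ν t
  rw [hsplit, hps] at hFTC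
  linarith

lemma combo_id (t : ℝ) :
    Real.cosh (4 * t) - 4 * Real.cosh (3 * t) + 4 * Real.cosh (2 * t) + 4 * Real.cosh (1 * t)
      - 5 * Real.cosh (0 * t) =
    8 * ((Real.cosh t - 1) ^ 3 * (Real.cosh t + 1)) := by
  have s2 : Real.sinh t ^ 2 = Real.cosh t ^ 2 - 1 := Real.sinh_sq t
  have c2 : Real.cosh (2 * t) = Real.cosh t ^ 2 + Real.sinh t ^ 2 := Real.cosh_two_mul t
  have s2m : Real.sinh (2 * t) = 2 * Real.sinh t * Real.cosh t := Real.sinh_two_mul t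
  have c3 : Real.cosh (3 * t) = Real.cosh (2 * t) * Real.cosh t + Real.sinh (2 * t) * Real.sinh t := by
    rw [show (3:ℝ) * t = 2 * t + t by ring, Real.cosh_add]
  have c4 : Real.cosh (4 * t) = Real.cosh (2 * t) ^ 2 + Real.sinh (2 * t) ^ 2 := by
    rw [show (4:ℝ) * t = 2 * (2 * t) by ring, Real.cosh_two_mul]
  rw [c4, c3, c2, s2m, one_mul, zero_mul, Real.cosh_zero]
  linear_combination (7 * Real.cosh t ^ 2 + Real.sinh t ^ 2 - 12 * Real.cosh t + 3) * s2

end Stmt3Aux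

open Stmt3Aux in
theorem stmt3 : ∀ ζ : ℝ, 0 < ζ → 1 + 5 / (2 * ζ) < besselK 3 ζ / besselK 2 ζ := by
  intro ζ hζ
  set J : ℝ := ∫ t in Ioi (0:ℝ),
    (Real.cosh t - 1) ^ 3 * (Real.cosh t + 1) * Real.exp (-ζ * Real.cosh t) with hJdef
  -- integrability of each cosh integrand
  have hi : ∀ n : ℝ, |n| ≤ 4 →
      IntegrableOn (fun t => Real.cosh (n * t) * Real.exp (-ζ * Real.cosh t)) (Ioi 0) :=
    fun n hn => integrableOn_cosh_mul hζ hn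
  have hi0 := hi 0 (by norm_num)
  have hi1 := hi 1 (by norm_num)
  have hi2 := hi 2 (by norm_num)
  have hi3 := hi 3 (by norm_num)
  have hi4 := hi 4 (by norm_num)
  have hiw := integrableOn_w hζ
  -- recurrences
  have R1 := recurrence hζ (ν := 1) (by norm_num) (by norm_num)
  have R2 := recurrence hζ (ν := 2) (by norm_num) (by norm_num)
  have R3 := recurrence hζ (ν := 3) (by norm_num) (by norm_num)
  norm_num at R1 R2 R3
  -- linear combination identity
  have R4 : besselK 4 ζ - 4 * besselK 3 ζ + 4 * besselK 2 ζ + 4 * besselK 1 ζ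
      - 5 * besselK 0 ζ = 8 * J := by
    have step : ∫ t in Ioi (0:ℝ),
        (Real.cosh (4*t) * Real.exp (-ζ * Real.cosh t)
          - 4 * (Real.cosh (3*t) * Real.exp (-ζ * Real.cosh t))
          + 4 * (Real.cosh (2*t) * Real.exp (-ζ * Real.cosh t))
          + 4 * (Real.cosh (1*t) * Real.exp (-ζ * Real.cosh t))
          - 5 * (Real.cosh (0*t) * Real.exp (-ζ * Real.cosh t))) =
        besselK 4 ζ - 4 * besselK 3 ζ + 4 * besselK 2 ζ + 4 * besselK 1 ζ
          - 5 * besselK 0 ζ := by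
      have A1 : IntegrableOn (fun t => Real.cosh (4*t) * Real.exp (-ζ * Real.cosh t)
          - 4 * (Real.cosh (3*t) * Real.exp (-ζ * Real.cosh t))) (Ioi 0) :=
        hi4.sub (hi3.const_mul 4)
      have A2 : IntegrableOn (fun t => Real.cosh (4*t) * Real.exp (-ζ * Real.cosh t)
          - 4 * (Real.cosh (3*t) * Real.exp (-ζ * Real.cosh t))
          + 4 * (Real.cosh (2*t) * Real.exp (-ζ * Real.cosh t))) (Ioi 0) :=
        A1.add (hi2.const_mul 4)
      have A3 : IntegrableOn (fun t => Real.cosh (4*t) * Real.exp (-ζ * Real.cosh t)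
          - 4 * (Real.cosh (3*t) * Real.exp (-ζ * Real.cosh t))
          + 4 * (Real.cosh (2*t) * Real.exp (-ζ * Real.cosh t))
          + 4 * (Real.cosh (1*t) * Real.exp (-ζ * Real.cosh t))) (Ioi 0) :=
        A2.add (hi1.const_mul 4)
      rw [integral_sub A3 (hi0.const_mul 5), integral_add A2 (hi1.const_mul 4),
        integral_add A1 (hi2.const_mul 4), integral_sub hi4 (hi3.const_mul 4),
        integral_const_mul, integral_const_mul, integral_const_mul, integral_const_mul]
      simp only [besselK]
    have step2 : ∫ t in Ioi (0:ℝ),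
        (Real.cosh (4*t) * Real.exp (-ζ * Real.cosh t)
          - 4 * (Real.cosh (3*t) * Real.exp (-ζ * Real.cosh t))
          + 4 * (Real.cosh (2*t) * Real.exp (-ζ * Real.cosh t))
          + 4 * (Real.cosh (1*t) * Real.exp (-ζ * Real.cosh t))
          - 5 * (Real.cosh (0*t) * Real.exp (-ζ * Real.cosh t))) =
        ∫ t in Ioi (0:ℝ),
          8 * ((Real.cosh t - 1) ^ 3 * (Real.cosh t + 1) * Real.exp (-ζ * Real.cosh t)) := by
      refine setIntegral_congr_fun measurableSet_Ioi fun t _ => ?_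
      show Real.cosh (4*t) * Real.exp (-ζ * Real.cosh t)
          - 4 * (Real.cosh (3*t) * Real.exp (-ζ * Real.cosh t))
          + 4 * (Real.cosh (2*t) * Real.exp (-ζ * Real.cosh t))
          + 4 * (Real.cosh (1*t) * Real.exp (-ζ * Real.cosh t))
          - 5 * (Real.cosh (0*t) * Real.exp (-ζ * Real.cosh t)) =
          8 * ((Real.cosh t - 1) ^ 3 * (Real.cosh t + 1) * Real.exp (-ζ * Real.cosh t))
      linear_combination Real.exp (-ζ * Real.cosh t) * combo_id t
    rw [← step, step2, integral_const_mul, hJdef]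
  -- positivity
  have hpos : ∀ {f : ℝ → ℝ}, IntegrableOn f (Ioi 0) → (∀ t ∈ Ioi (0:ℝ), 0 < f t) →
      0 < ∫ t in Ioi (0:ℝ), f t := by
    intro f hint hfpos
    rw [setIntegral_pos_iff_support_of_nonneg_ae ?_ hint]
    · refine lt_of_lt_of_le ?_ (measure_mono
        (fun t ht => ⟨(hfpos t ht).ne', ht⟩ : Ioi (0:ℝ) ⊆ Function.support f ∩ Ioi 0))
      simp [Real.volume_Ioi]
    · filter_upwards [ae_restrict_mem measurableSet_Ioi] with t ht using (hfpos t ht).le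
  have hJpos : 0 < J := by
    refine hpos hiw fun t ht => ?_
    have h1 : 1 < Real.cosh t := by
      rw [Real.one_lt_cosh]
      exact (mem_Ioi.mp ht).ne'
    exact mul_pos (mul_pos (pow_pos (by linarith) 3) (by linarith)) (Real.exp_pos _)
  have hK2pos : 0 < besselK 2 ζ := by
    rw [besselK]
    refine hpos hi2 fun t ht => ?_
    exact mul_pos (Real.cosh_pos (2 * t)) (Real.exp_pos _)
  -- final algebra
  rw [lt_div_iff₀ hK2pos]
  have key : 2 * ζ * besselK 3 ζ - 2 * ζ * besselK 2 ζ - 5 * besselK 2 ζ = ζ ^ 2 * J := by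
    linear_combination (ζ^2/8) * R4 - (ζ/8) * R3 - (5*ζ/8) * R1 + (ζ/2 + 5/4) * R2
  have hζJ : 0 < ζ ^ 2 * J := mul_pos (pow_pos hζ 2) hJpos
  have h2ζ : (0:ℝ) < 2 * ζ := by positivity
  rw [show (1:ℝ) + 5 / (2*ζ) = (2*ζ + 5) / (2*ζ) by field_simp]
  rw [div_mul_eq_mul_div, div_lt_iff₀ h2ζ]
  nlinarith [key, hζJ]
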